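/- Let F be an n-dimensional F_q-vector space and X ⊆ F a fixed j-dimensional subspace. Then for 0 ≤ ℓ, the number of i-dimensional subspaces Y ⊆ F with dim(X ∩ Y) = ℓ equals q^{(i-ℓ)(j-ℓ)} · [n-j choose i-ℓ]_q · [j choose ℓ]_q. -/

import Mathlib

open Module Submodule

section Aux

variable {K : Type} [Field K] [Fintype K]

/-- Projections onto `p` fixing `p`, identified with `Hom(q0, p)` for a fixed complement. -/
noncomputable def projEquivHom {E : Type*} [AddCommGroup E] [Module K E]
    (p q0 : Submodule K E) (h : IsCompl p q0) :
    { f : E →ₗ[K] p // ∀ x : p, f x = x } ≃ (q0 →ₗ[K] p) where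
  toFun f := f.1 ∘ₗ q0.subtype
  invFun g := ⟨p.projectionOnto q0 h + g ∘ₗ (q0.projectionOnto p h.symm), fun x => by
    simp⟩
  left_inv := by
    rintro ⟨f, hf⟩
    apply Subtype.ext
    ext x
    have hx := Submodule.projection_add_projection_eq_self h x
    rw [Submodule.projection_apply, Submodule.projection_apply] at hx
    simp only [LinearMap.add_apply, LinearMap.comp_apply, Submodule.coe_subtype,
      Submodule.coe_add]
    rw [← hf (p.projectionOnto q0 h x), ← Submodule.coe_add, ← map_add, hx]
  right_inv g := by
    ext y
    simp

lemma card_module (V : Type*) [AddCommGroup V] [Module K V] [FiniteDimensional K V] :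
    Nat.card V = Fintype.card K ^ finrank K V := by
  haveI : Finite V := Module.finite_of_finite K
  cases nonempty_fintype V
  rw [Nat.card_eq_fintype_card]
  exact card_eq_pow_finrank

/-- Number of complements of a subspace. -/
lemma card_isCompl {E : Type*} [AddCommGroup E] [Module K E] [FiniteDimensional K E]
    (p : Submodule K E) :
    Nat.card { q : Submodule K E // IsCompl p q } =
      Fintype.card K ^ ((finrank K E - finrank K p) * finrank K p) := by
  obtain ⟨q0, hq0⟩ := p.exists_isCompl
  rw [Nat.card_congr ((p.isComplEquivProj).trans (projEquivHom p q0 hq0))]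
  rw [card_module (K := K) (↥q0 →ₗ[K] ↥p), Module.finrank_linearMap]
  have h1 := Submodule.finrank_add_eq_of_isCompl hq0
  have h2 : finrank K ↥q0 = finrank K E - finrank K ↥p := by omega
  rw [h2]

end Aux

section Aux2

variable {K : Type} [Field K] [Fintype K]

lemma finrank_map_add_inf_ker {E E' : Type*} [AddCommGroup E] [Module K E]
    [AddCommGroup E'] [Module K E'] (f : E →ₗ[K] E') (Y : Submodule K E)
    [FiniteDimensional K Y] :
    finrank K (Y.map f) + finrank K ↥(Y ⊓ LinearMap.ker f) = finrank K Y := by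
  have h1 := LinearMap.finrank_range_add_finrank_ker (f ∘ₗ Y.subtype)
  rw [LinearMap.range_comp, Submodule.range_subtype, LinearMap.ker_comp,
    ← Submodule.finrank_map_subtype_eq Y (Submodule.comap Y.subtype (LinearMap.ker f)),
    Submodule.map_comap_subtype] at h1
  exact h1

/-- Number of subspaces `Y` with `Y ⊓ A = U` and `Y ⊔ A = ⊤`. -/
lemma card_sandwich {E : Type*} [AddCommGroup E] [Module K E] [FiniteDimensional K E]
    (A U : Submodule K E) (hUA : U ≤ A) :
    Nat.card { Y : Submodule K E // Y ⊓ A = U ∧ Y ⊔ A = ⊤ } =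
      Fintype.card K ^ ((finrank K E - finrank K A) * (finrank K A - finrank K U)) := by
  classical
  have hcomapA : Submodule.comap U.mkQ (A.map U.mkQ) = A := by
    rw [Submodule.comap_map_mkQ, sup_eq_right.mpr hUA]
  have hmapcomap : ∀ q : Submodule K (E ⧸ U),
      Submodule.map U.mkQ (Submodule.comap U.mkQ q) = q := by
    intro q
    rw [Submodule.map_comap_eq, Submodule.range_mkQ, top_inf_eq]
  have hcomapmap : ∀ Y : Submodule K E, U ≤ Y →
      Submodule.comap U.mkQ (Submodule.map U.mkQ Y) = Y := by
    intro Y hUY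
    rw [Submodule.comap_map_mkQ, sup_eq_right.mpr hUY]
  have e : { q : Submodule K (E ⧸ U) // IsCompl (A.map U.mkQ) q } ≃
      { Y : Submodule K E // Y ⊓ A = U ∧ Y ⊔ A = ⊤ } :=
    { toFun := fun q => ⟨Submodule.comap U.mkQ q.1, by
        constructor
        · have h := congrArg (Submodule.comap U.mkQ) q.2.inf_eq_bot
          rwa [Submodule.comap_inf, Submodule.comap_bot, Submodule.ker_mkQ, hcomapA,
            inf_comm] at h
        · have h := congrArg (Submodule.comap U.mkQ) q.2.sup_eq_top
          rw [Submodule.comap_top] at h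
          have h2 : A.map U.mkQ ⊔ q.1 =
              Submodule.map U.mkQ (A ⊔ Submodule.comap U.mkQ q.1) := by
            rw [Submodule.map_sup, hmapcomap]
          rw [h2, hcomapmap _ (le_trans hUA le_sup_left)] at h
          rwa [sup_comm] at h⟩,
      invFun := fun Y => ⟨Submodule.map U.mkQ Y.1, by
        obtain ⟨Y, hY1, hY2⟩ := Y
        have hUY : U ≤ Y := hY1.symm.trans_le inf_le_left
        rw [isCompl_iff, disjoint_iff, codisjoint_iff]
        constructor
        · apply Submodule.comap_injective_of_surjective (U.mkQ_surjective)
          rw [Submodule.comap_inf, Submodule.comap_bot, hcomapA, hcomapmap _ hUY,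
            Submodule.ker_mkQ, inf_comm]
          exact hY1
        · rw [← Submodule.map_sup, sup_comm, hY2, Submodule.map_top, Submodule.range_mkQ]⟩,
      left_inv := fun q => Subtype.ext (hmapcomap q.1),
      right_inv := fun Y => Subtype.ext (hcomapmap Y.1 (Y.2.1.symm.trans_le inf_le_left)) }
  rw [← Nat.card_congr e, card_isCompl]
  have h1 : finrank K (E ⧸ U) + finrank K U = finrank K E :=
    Submodule.finrank_quotient_add_finrank U
  have h2 : finrank K ↥(A.map U.mkQ) + finrank K ↥(A ⊓ LinearMap.ker U.mkQ) = finrank K A :=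
    finrank_map_add_inf_ker U.mkQ A
  rw [Submodule.ker_mkQ, inf_eq_right.mpr hUA] at h2
  have h3 : finrank K U ≤ finrank K A := Submodule.finrank_mono hUA
  have h4 : finrank K A ≤ finrank K E := A.finrank_le
  have hAbar' : finrank K ↥(A.map U.mkQ) = finrank K A - finrank K U := by omega
  have hquot : finrank K (E ⧸ U) = finrank K E - finrank K U := by omega
  rw [hAbar', hquot]
  congr 2
  omega

/-- Version of `card_sandwich` with top replaced by an intermediate subspace `V'`. -/
lemma card_sandwich' {E : Type*} [AddCommGroup E] [Module K E] [FiniteDimensional K E]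
    (A U V' : Submodule K E) (hUA : U ≤ A) (hAV' : A ≤ V') :
    Nat.card { Y : Submodule K E // Y ⊓ A = U ∧ Y ⊔ A = V' } =
      Fintype.card K ^ ((finrank K V' - finrank K A) * (finrank K A - finrank K U)) := by
  classical
  have hinj : Function.Injective V'.subtype := Subtype.coe_injective
  have hUV' : U ≤ V' := le_trans hUA hAV'
  have hmapA : Submodule.map V'.subtype (Submodule.comap V'.subtype A) = A := by
    rw [Submodule.map_comap_eq, Submodule.range_subtype, inf_eq_right.mpr hAV']
  have hmapU : Submodule.map V'.subtype (Submodule.comap V'.subtype U) = U := by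
    rw [Submodule.map_comap_eq, Submodule.range_subtype, inf_eq_right.mpr hUV']
  have hmaptop : Submodule.map V'.subtype ⊤ = V' := by
    rw [Submodule.map_top, Submodule.range_subtype]
  have e : { Z : Submodule K ↥V' //
        Z ⊓ Submodule.comap V'.subtype A = Submodule.comap V'.subtype U ∧
        Z ⊔ Submodule.comap V'.subtype A = ⊤ } ≃
      { Y : Submodule K E // Y ⊓ A = U ∧ Y ⊔ A = V' } :=
    { toFun := fun Z => ⟨Submodule.map V'.subtype Z.1, by
        obtain ⟨Z, hZ1, hZ2⟩ := Z
        constructor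
        · show Submodule.map V'.subtype Z ⊓ A = U
          rw [← hmapA, ← Submodule.map_inf V'.subtype hinj, hZ1, hmapU]
        · show Submodule.map V'.subtype Z ⊔ A = V'
          conv_lhs => rw [← hmapA]
          rw [← Submodule.map_sup, hZ2, hmaptop]⟩,
      invFun := fun Y => ⟨Submodule.comap V'.subtype Y.1, by
        obtain ⟨Y, hY1, hY2⟩ := Y
        have hYV' : Y ≤ V' := le_sup_left.trans (le_of_eq hY2)
        constructor
        · rw [← Submodule.comap_inf, hY1]
        · apply Submodule.map_injective_of_injective hinj
          rw [Submodule.map_sup, Submodule.map_comap_eq, Submodule.range_subtype,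
            inf_eq_right.mpr hYV', hmapA, hY2, hmaptop]⟩,
      left_inv := fun Z => Subtype.ext (by
        show Submodule.comap V'.subtype (Submodule.map V'.subtype Z.1) = Z.1
        rw [Submodule.comap_map_eq, Submodule.ker_subtype, sup_bot_eq]),
      right_inv := fun Y => Subtype.ext (by
        have hYV' : Y.1 ≤ V' := le_sup_left.trans (le_of_eq Y.2.2)
        show Submodule.map V'.subtype (Submodule.comap V'.subtype Y.1) = Y.1
        rw [Submodule.map_comap_eq, Submodule.range_subtype, inf_eq_right.mpr hYV']) }
  rw [← Nat.card_congr e, card_sandwich _ _ (Submodule.comap_mono hUA)]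
  have e1 : finrank K ↥(Submodule.comap V'.subtype A) = finrank K A :=
    LinearEquiv.finrank_eq (Submodule.comapSubtypeEquivOfLe hAV')
  have e2 : finrank K ↥(Submodule.comap V'.subtype U) = finrank K U :=
    LinearEquiv.finrank_eq (Submodule.comapSubtypeEquivOfLe hUV')
  rw [e1, e2]

/-- Counting subspaces of fixed dimension is invariant under linear equivalence. -/
noncomputable def subcountEquiv {V V' : Type*} [AddCommGroup V] [Module K V] [AddCommGroup V']
    [Module K V'] (e : V ≃ₗ[K] V') (d : ℕ) :
    {W : Submodule K V // finrank K W = d} ≃ {W : Submodule K V' // finrank K W = d} :=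
  Equiv.subtypeEquiv (Submodule.orderIsoMapComap e).toEquiv (fun W => by
    rw [show ((Submodule.orderIsoMapComap e).toEquiv W) = W.map (e : V →ₗ[K] V') from rfl,
      LinearEquiv.finrank_map_eq])

lemma finite_submodule (M : Type*) [AddCommGroup M] [Module K M] [Finite M] :
    Finite (Submodule K M) :=
  Finite.of_injective (fun p => (p : Set M)) SetLike.coe_injective

end Aux2

theorem stmt10 (Fq F : Type) [Field Fq] [Fintype Fq] [AddCommGroup F] [Module Fq F]
    [FiniteDimensional Fq F] (n i j ℓ : ℕ) (hn : Module.finrank Fq F = n)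
    (hℓi : ℓ ≤ i) (hℓj : ℓ ≤ j)
    (X : Submodule Fq F) (hX : Module.finrank Fq X = j) :
    Nat.card {Y : Submodule Fq F //
        Module.finrank Fq Y = i ∧ Module.finrank Fq ↥(X ⊓ Y) = ℓ}
      = Fintype.card Fq ^ ((i - ℓ) * (j - ℓ)) *
        Nat.card {W : Submodule Fq (Fin (n - j) → Fq) // Module.finrank Fq W = i - ℓ} *
        Nat.card {W : Submodule Fq (Fin j → Fq) // Module.finrank Fq W = ℓ} := by
  classical
  haveI : Finite F := Module.finite_of_finite Fq
  haveI : Finite (Submodule Fq F) := finite_submodule F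
  haveI : Finite (Submodule Fq ↥X) := finite_submodule ↥X
  haveI : Finite (F ⧸ X) := Finite.of_surjective _ X.mkQ_surjective
  haveI : Finite (Submodule Fq (F ⧸ X)) := finite_submodule (F ⧸ X)
  have hjn : j ≤ n := by rw [← hn, ← hX]; exact X.finrank_le
  -- dimension of images in the quotient
  have hmapdim : ∀ Y : Submodule Fq F, finrank Fq ↥(X ⊓ Y) = ℓ → finrank Fq Y = i →
      finrank Fq ↥(Y.map X.mkQ) = i - ℓ := by
    intro Y h1 h2
    have h3 := finrank_map_add_inf_ker X.mkQ Y
    rw [Submodule.ker_mkQ, inf_comm Y X, h1, h2] at h3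
    omega
  set D := {Y : Submodule Fq F //
    Module.finrank Fq Y = i ∧ Module.finrank Fq ↥(X ⊓ Y) = ℓ} with hD
  set B := ({U : Submodule Fq ↥X // finrank Fq ↥U = ℓ} ×
    {W : Submodule Fq (F ⧸ X) // finrank Fq ↥W = i - ℓ}) with hB
  let Φ : D → B := fun Y =>
    (⟨Submodule.comap X.subtype (X ⊓ Y.1),
      (LinearEquiv.finrank_eq (Submodule.comapSubtypeEquivOfLe inf_le_left)).trans Y.2.2⟩,
     ⟨Submodule.map X.mkQ Y.1, hmapdim Y.1 Y.2.2 Y.2.1⟩)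
  -- counting the fibers of Φ
  have hfiber : ∀ b : B, Nat.card {y : D // Φ y = b} =
      Fintype.card Fq ^ ((i - ℓ) * (j - ℓ)) := by
    rintro ⟨⟨U, hU⟩, ⟨W, hW⟩⟩
    have hXV' : X ≤ Submodule.comap X.mkQ W := by
      intro x hx
      have hx0 : X.mkQ x = 0 := (Submodule.Quotient.mk_eq_zero X).mpr hx
      simp [Submodule.mem_comap, hx0]
    have key2 : ∀ Y : Submodule Fq F, Y ⊔ X = Submodule.comap X.mkQ W →
        Submodule.map X.mkQ Y = W := by
      intro Y h
      have h5 : Submodule.map X.mkQ (Y ⊔ X) = Submodule.map X.mkQ Y := by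
        rw [Submodule.map_sup, Submodule.mkQ_map_self, sup_bot_eq]
      rw [h] at h5
      rw [← h5, Submodule.map_comap_eq, Submodule.range_mkQ, top_inf_eq]
    have key1 : ∀ Y : Submodule Fq F, Submodule.map X.mkQ Y = W →
        Y ⊔ X = Submodule.comap X.mkQ W := by
      intro Y h
      have h5 : Submodule.comap X.mkQ (Submodule.map X.mkQ (X ⊔ Y)) = X ⊔ Y := by
        rw [Submodule.comap_map_mkQ, ← sup_assoc, sup_idem]
      rw [Submodule.map_sup, Submodule.mkQ_map_self, bot_sup_eq, h] at h5
      rw [sup_comm, ← h5]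
    have hUℓ : finrank Fq ↥(Submodule.map X.subtype U) = ℓ := by
      rw [Submodule.finrank_map_subtype_eq]; exact hU
    have e1 : {y : D // Φ y = (⟨U, hU⟩, ⟨W, hW⟩)} ≃
        {Y : Submodule Fq F // Y ⊓ X = Submodule.map X.subtype U ∧
          Y ⊔ X = Submodule.comap X.mkQ W} :=
      { toFun := fun y => ⟨y.1.1, by
          have h1 : Submodule.comap X.subtype (X ⊓ y.1.1) = U :=
            congrArg (fun p : B => (p.1 : Submodule Fq ↥X)) y.2
          have h2 : Submodule.map X.mkQ y.1.1 = W :=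
            congrArg (fun p : B => (p.2 : Submodule Fq (F ⧸ X))) y.2
          constructor
          · have h3 := congrArg (Submodule.map X.subtype) h1
            rw [Submodule.map_comap_subtype, ← inf_assoc, inf_idem] at h3
            rw [inf_comm]
            exact h3
          · exact key1 _ h2⟩,
        invFun := fun Y => ⟨⟨Y.1, by
          have hY1 := Y.2.1
          have hY2 := Y.2.2
          have hXY : finrank Fq ↥(X ⊓ Y.1) = ℓ := by
            rw [inf_comm X Y.1, hY1, hUℓ]
          refine ⟨?_, hXY⟩
          have h3 := finrank_map_add_inf_ker X.mkQ Y.1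
          rw [Submodule.ker_mkQ, key2 Y.1 hY2, hW, inf_comm Y.1 X, hXY] at h3
          omega⟩, by
          apply Prod.ext_iff.mpr
          constructor
          · apply Subtype.ext
            show Submodule.comap X.subtype (X ⊓ Y.1) = U
            rw [inf_comm X Y.1, Y.2.1, Submodule.comap_map_eq, Submodule.ker_subtype,
              sup_bot_eq]
          · apply Subtype.ext
            show Submodule.map X.mkQ Y.1 = W
            exact key2 Y.1 Y.2.2⟩,
        left_inv := fun y => Subtype.ext (Subtype.ext rfl),
        right_inv := fun Y => Subtype.ext rfl }
    rw [Nat.card_congr e1,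
      card_sandwich' X (Submodule.map X.subtype U) (Submodule.comap X.mkQ W)
        (Submodule.map_subtype_le X U) hXV']
    have hV : finrank Fq ↥(Submodule.comap X.mkQ W) = (i - ℓ) + j := by
      have h3 := finrank_map_add_inf_ker X.mkQ (Submodule.comap X.mkQ W)
      rw [Submodule.ker_mkQ, Submodule.map_comap_eq, Submodule.range_mkQ, top_inf_eq,
        inf_eq_right.mpr hXV', hW, hX] at h3
      omega
    rw [hV, hX, hUℓ, Nat.add_sub_cancel]
  -- sum over the fibers
  haveI : Fintype D := Fintype.ofFinite _
  haveI : Fintype B := Fintype.ofFinite _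
  haveI : ∀ b : B, Fintype {y : D // Φ y = b} := fun b => Fintype.ofFinite _
  have hsum : Nat.card D = ∑ b : B, Nat.card {y : D // Φ y = b} := by
    rw [Nat.card_congr (Equiv.sigmaFiberEquiv Φ).symm, Nat.card_eq_fintype_card,
      Fintype.card_sigma]
    exact Finset.sum_congr rfl fun b _ => (Nat.card_eq_fintype_card).symm
  have htot : Nat.card D = Nat.card B * Fintype.card Fq ^ ((i - ℓ) * (j - ℓ)) := by
    rw [hsum, Finset.sum_congr rfl fun b _ => hfiber b, Finset.sum_const, Finset.card_univ,
      smul_eq_mul, Nat.card_eq_fintype_card]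
  -- identify the two factors of B
  have eX : ↥X ≃ₗ[Fq] (Fin j → Fq) :=
    LinearEquiv.ofFinrankEq _ _ (by rw [hX, Module.finrank_fin_fun])
  have hquot : finrank Fq (F ⧸ X) = n - j := by
    have := Submodule.finrank_quotient_add_finrank X
    omega
  have eQ : (F ⧸ X) ≃ₗ[Fq] (Fin (n - j) → Fq) :=
    LinearEquiv.ofFinrankEq _ _ (by rw [hquot, Module.finrank_fin_fun])
  have hcard1 : Nat.card {U : Submodule Fq ↥X // finrank Fq ↥U = ℓ} =
      Nat.card {W : Submodule Fq (Fin j → Fq) // Module.finrank Fq W = ℓ} :=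
    Nat.card_congr (subcountEquiv eX ℓ)
  have hcard2 : Nat.card {W : Submodule Fq (F ⧸ X) // finrank Fq ↥W = i - ℓ} =
      Nat.card {W : Submodule Fq (Fin (n - j) → Fq) // Module.finrank Fq W = i - ℓ} :=
    Nat.card_congr (subcountEquiv eQ (i - ℓ))
  rw [htot, hB, Nat.card_prod, hcard1, hcard2]
  ring
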